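/- Let A be an integral domain and ⋆ a star operation of finite type on A. Then A has the ⋆-finite character if and only if for every nonzero a ∈ A, every ⋆-comaximal collection over a consisting of proper ⋆-finite ⋆-ideals of A is finite. -/

import Mathlib

open scoped nonZeroDivisors

/-- A star operation on an integral domain `A` with quotient field `K`: a map on
(nonzero) fractional ideals satisfying `A^⋆ = A`, `(xI)^⋆ = x·I^⋆`, `I ⊆ I^⋆`,
monotonicity and idempotency. -/
structure StarOperation (A : Type*) [CommRing A] [IsDomain A]
    (K : Type*) [Field K] [Algebra A K] [IsFractionRing A K] where
  star : FractionalIdeal A⁰ K → FractionalIdeal A⁰ K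
  star_one : star 1 = 1
  star_smul : ∀ (x : K), x ≠ 0 → ∀ I : FractionalIdeal A⁰ K, I ≠ 0 →
    star (FractionalIdeal.spanSingleton A⁰ x * I) = FractionalIdeal.spanSingleton A⁰ x * star I
  le_star : ∀ I : FractionalIdeal A⁰ K, I ≠ 0 → I ≤ star I
  mono : ∀ I J : FractionalIdeal A⁰ K, I ≠ 0 → I ≤ J → star I ≤ star J
  star_idem : ∀ I : FractionalIdeal A⁰ K, I ≠ 0 → star (star I) = star I

variable {A : Type*} [CommRing A] [IsDomain A]
  {K : Type*} [Field K] [Algebra A K] [IsFractionRing A K]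

/-- `⋆` is of finite type: `I^⋆` is the union of the `J^⋆` over the finitely
generated (nonzero) fractional ideals `J ⊆ I`. -/
def StarOperation.IsFiniteType (s : StarOperation A K) : Prop :=
  ∀ I : FractionalIdeal A⁰ K, I ≠ 0 → ∀ x : K, x ∈ s.star I →
    ∃ J : FractionalIdeal A⁰ K, J ≠ 0 ∧ J ≤ I ∧ (J : Submodule A K).FG ∧ x ∈ s.star J

/-- A (nonzero, integral) ideal `I` is a `⋆`-ideal if `I^⋆ = I`. -/
def IsStarIdeal (s : StarOperation A K) (I : Ideal A) : Prop :=
  I ≠ 0 ∧ s.star ↑I = (I : FractionalIdeal A⁰ K)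

/-- A (nonzero, integral) ideal `I` is `⋆`-finite if `J^⋆ = I^⋆` for some finitely
generated (nonzero) ideal `J`. -/
def IsStarFinite (s : StarOperation A K) (I : Ideal A) : Prop :=
  I ≠ 0 ∧ ∃ J : Ideal A, J ≠ 0 ∧ J.FG ∧ s.star ↑J = s.star (I : FractionalIdeal A⁰ K)

/-- An ideal of `A` is `⋆`-maximal if it is maximal among proper `⋆`-ideals. -/
def IsStarMaximal (s : StarOperation A K) (M : Ideal A) : Prop :=
  M ≠ ⊤ ∧ IsStarIdeal s M ∧ ∀ J : Ideal A, J ≠ ⊤ → IsStarIdeal s J → M ≤ J → J = M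

/-- Property (⋆-c.a.): for every pair of proper ⋆-finite ⋆-ideals `𝔞₁, 𝔞₂` containing
`𝔞`, the ideal `(𝔞₁ + 𝔞₂)^⋆` is proper. -/
def StarCA (s : StarOperation A K) (𝔞 : Ideal A) : Prop :=
  ∀ 𝔞₁ 𝔞₂ : Ideal A, 𝔞 ≤ 𝔞₁ → 𝔞 ≤ 𝔞₂ →
    𝔞₁ ≠ ⊤ → IsStarIdeal s 𝔞₁ → IsStarFinite s 𝔞₁ →
    𝔞₂ ≠ ⊤ → IsStarIdeal s 𝔞₂ → IsStarFinite s 𝔞₂ →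
    s.star ↑(𝔞₁ + 𝔞₂) ≠ 1

/-- `ℱ` is a ⋆-comaximal collection over `a`: `a` lies in every member and
`(𝔞₁ + 𝔞₂)^⋆ = A` for all distinct members. -/
def IsStarComaximalOver (s : StarOperation A K) (a : A) (F : Set (Ideal A)) : Prop :=
  (∀ I ∈ F, a ∈ I) ∧ ∀ I ∈ F, ∀ J ∈ F, I ≠ J → s.star ↑(I + J) = 1

/-- `(Σ')^⋆_a`: the ⋆-comaximal collections over `a` of proper ⋆-finite ⋆-ideals. -/
def SigmaP (s : StarOperation A K) (a : A) : Set (Set (Ideal A)) :=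
  {F | IsStarComaximalOver s a F ∧ ∀ I ∈ F, I ≠ ⊤ ∧ IsStarIdeal s I ∧ IsStarFinite s I}

/-- `Σ^⋆_a`: members of `(Σ')^⋆_a` all of whose ideals satisfy (⋆-c.a.). -/
def SigmaCA (s : StarOperation A K) (a : A) : Set (Set (Ideal A)) :=
  {F | F ∈ SigmaP s a ∧ ∀ I ∈ F, StarCA s I}


set_option linter.unusedSectionVars false

section Helpers

open FractionalIdeal

variable (s : StarOperation A K)

lemma coeI_ne_zero {I : Ideal A} (h : I ≠ 0) : (I : FractionalIdeal A⁰ K) ≠ 0 :=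
  (FractionalIdeal.coeIdeal_ne_zero' (le_refl A⁰)).mpr h

lemma ne_zero_of_le' {X Y : Ideal A} (hX : X ≠ 0) (hXY : X ≤ Y) : Y ≠ 0 :=
  fun h0 => hX (le_bot_iff.mp (hXY.trans h0.le))

lemma star_coe_le_one {I : Ideal A} (h : I ≠ 0) :
    s.star ↑I ≤ (1 : FractionalIdeal A⁰ K) := by
  have := s.mono ↑I 1 (coeI_ne_zero h) FractionalIdeal.coeIdeal_le_one
  rwa [s.star_one] at this

lemma le_star_coe {I : Ideal A} (h : I ≠ 0) : (I : FractionalIdeal A⁰ K) ≤ s.star ↑I :=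
  s.le_star _ (coeI_ne_zero h)

lemma star_eq_one_of_one_mem {I : Ideal A} (h : I ≠ 0)
    (h1 : (1 : K) ∈ s.star (I : FractionalIdeal A⁰ K)) : s.star ↑I = 1 :=
  le_antisymm (star_coe_le_one s h) (FractionalIdeal.one_le.mpr h1)

lemma one_mem_of_star_eq_one {I : Ideal A}
    (h : s.star ↑I = (1 : FractionalIdeal A⁰ K)) :
    (1 : K) ∈ s.star (I : FractionalIdeal A⁰ K) := by
  rw [h]; exact FractionalIdeal.one_mem_one _

lemma star_coe_mono {I J : Ideal A} (hI : I ≠ 0) (hIJ : I ≤ J) :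
    s.star ↑I ≤ s.star (J : FractionalIdeal A⁰ K) :=
  s.mono _ _ (coeI_ne_zero hI) ((FractionalIdeal.coeIdeal_le_coeIdeal K).mpr hIJ)

lemma star_eq_one_of_le {X Y : Ideal A} (hX : X ≠ 0) (hXY : X ≤ Y)
    (h : s.star ↑X = (1 : FractionalIdeal A⁰ K)) : s.star ↑Y = 1 := by
  have hY : Y ≠ 0 := ne_zero_of_le' hX hXY
  exact star_eq_one_of_one_mem s hY
    (star_coe_mono s hX hXY (one_mem_of_star_eq_one s h))

open Classical in
noncomputable def starCl (s : StarOperation A K) (I : Ideal A) : Ideal A :=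
  if h : I = 0 then 0 else
    Classical.choose (FractionalIdeal.le_one_iff_exists_coeIdeal.mp (star_coe_le_one s h))

lemma coe_starCl {I : Ideal A} (h : I ≠ 0) :
    ((starCl s I : Ideal A) : FractionalIdeal A⁰ K) = s.star ↑I := by
  unfold starCl
  rw [dif_neg h]
  exact Classical.choose_spec (FractionalIdeal.le_one_iff_exists_coeIdeal.mp (star_coe_le_one s h))

lemma le_starCl {I : Ideal A} (h : I ≠ 0) : I ≤ starCl s I := by
  rw [← FractionalIdeal.coeIdeal_le_coeIdeal K, coe_starCl s h]
  exact le_star_coe s h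

lemma starCl_ne_zero {I : Ideal A} (h : I ≠ 0) : starCl s I ≠ 0 :=
  ne_zero_of_le' h (le_starCl s h)

lemma isStarIdeal_starCl {I : Ideal A} (h : I ≠ 0) : IsStarIdeal s (starCl s I) := by
  refine ⟨starCl_ne_zero s h, ?_⟩
  rw [coe_starCl s h, s.star_idem _ (coeI_ne_zero h)]

lemma starCl_le_of_le {I J : Ideal A} (hI : I ≠ 0) (hJ : IsStarIdeal s J) (hIJ : I ≤ J) :
    starCl s I ≤ J := by
  rw [← FractionalIdeal.coeIdeal_le_coeIdeal K, coe_starCl s hI, ← hJ.2]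
  exact star_coe_mono s hI hIJ

lemma starCl_eq_top_iff {I : Ideal A} (h : I ≠ 0) :
    starCl s I = ⊤ ↔ s.star ↑I = (1 : FractionalIdeal A⁰ K) := by
  rw [← coe_starCl s h, ← FractionalIdeal.coeIdeal_top,
    (FractionalIdeal.coeIdeal_inj' (P := K) (le_refl A⁰))]

lemma star_sup_congr {I₁ I₂ Y : Ideal A} (h1 : I₁ ≠ 0) (h2 : I₂ ≠ 0)
    (h : s.star ↑I₁ = s.star (I₂ : FractionalIdeal A⁰ K)) :
    s.star ↑(I₁ ⊔ Y) = s.star ((I₂ ⊔ Y : Ideal A) : FractionalIdeal A⁰ K) := by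
  have key : ∀ J₁ J₂ : Ideal A, J₁ ≠ 0 → J₂ ≠ 0 →
      s.star ↑J₁ ≤ s.star (J₂ : FractionalIdeal A⁰ K) →
      s.star ↑(J₁ ⊔ Y) ≤ s.star ((J₂ ⊔ Y : Ideal A) : FractionalIdeal A⁰ K) := by
    intro J₁ J₂ hJ1 hJ2 hle
    have hJ1Y : J₁ ⊔ Y ≠ 0 := ne_zero_of_le' hJ1 le_sup_left
    have hJ2Y : J₂ ⊔ Y ≠ 0 := ne_zero_of_le' hJ2 le_sup_left
    have hbase : (↑(J₁ ⊔ Y) : FractionalIdeal A⁰ K) ≤ s.star ↑(J₂ ⊔ Y) := by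
      rw [FractionalIdeal.coeIdeal_sup, ← FractionalIdeal.sup_eq_add]
      refine sup_le ?_ ?_
      · exact (s.le_star _ (coeI_ne_zero hJ1)).trans
          (hle.trans (star_coe_mono s hJ2 le_sup_left))
      · exact ((FractionalIdeal.coeIdeal_le_coeIdeal K).mpr
          (le_sup_right (a := J₂))).trans (le_star_coe s hJ2Y)
    calc s.star ↑(J₁ ⊔ Y) ≤ s.star (s.star ↑(J₂ ⊔ Y)) :=
          s.mono _ _ (coeI_ne_zero hJ1Y) hbase
      _ = s.star ↑(J₂ ⊔ Y) := s.star_idem _ (coeI_ne_zero hJ2Y)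
  exact le_antisymm (key _ _ h1 h2 h.le) (key _ _ h2 h1 h.ge)

end Helpers

set_option linter.unusedSectionVars false

section Helpers2

variable (s : StarOperation A K)

/-- Every proper ⋆-ideal is contained in a ⋆-maximal ideal (for finite type ⋆). -/
lemma exists_starMaximal (hs : s.IsFiniteType) {I : Ideal A}
    (hI : IsStarIdeal s I) (htop : I ≠ ⊤) :
    ∃ M : Ideal A, IsStarMaximal s M ∧ I ≤ M := by
  set S : Set (Ideal A) := {J | J ≠ ⊤ ∧ IsStarIdeal s J ∧ I ≤ J} with hS
  have hchain : ∀ c ⊆ S, IsChain (· ≤ ·) c → ∀ y ∈ c, ∃ ub ∈ S, ∀ z ∈ c, z ≤ ub := by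
    intro c hcS hchain y hy
    refine ⟨sSup c, ⟨?_, ⟨?_, ?_⟩, ?_⟩, fun z hz => le_sSup hz⟩
    · -- proper
      intro htop'
      have h1 : (1 : A) ∈ sSup c := htop' ▸ Submodule.mem_top
      obtain ⟨J, hJc, h1J⟩ := (Submodule.mem_sSup_of_directed ⟨y, hy⟩
        hchain.directedOn).mp h1
      exact (hcS hJc).1 (Ideal.eq_top_of_isUnit_mem _ h1J isUnit_one)
    · -- nonzero
      exact ne_zero_of_le' hI.1 (((hcS hy).2.2).trans (le_sSup hy))
    · -- star ideal
      have hne : sSup c ≠ 0 := ne_zero_of_le' hI.1 (((hcS hy).2.2).trans (le_sSup hy))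
      refine le_antisymm ?_ (le_star_coe s hne)
      intro x hx
      obtain ⟨J, hJ0, hJle, hJfg, hxJ⟩ := hs _ (coeI_ne_zero hne) x hx
      obtain ⟨J₀, rfl⟩ := FractionalIdeal.le_one_iff_exists_coeIdeal.mp
        (hJle.trans FractionalIdeal.coeIdeal_le_one)
      have hJ₀0 : J₀ ≠ 0 := fun h0 => hJ0 (by rw [h0]; simp)
      have hJ₀fg : J₀.FG :=
        (IsLocalization.coeSubmodule_fg K (IsFractionRing.injective A K) J₀).mp
          (by rw [← FractionalIdeal.coe_coeIdeal]; exact hJfg)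
      have hJ₀le : J₀ ≤ sSup c := (FractionalIdeal.coeIdeal_le_coeIdeal K).mp hJle
      have hcomp : IsCompactElement J₀ := (Submodule.fg_iff_compact J₀).mp hJ₀fg
      obtain ⟨E, hEc, hJ₀E⟩ :=
        (CompleteLattice.isCompactElement_iff_le_of_directed_sSup_le (α := Ideal A) J₀).mp
          hcomp c ⟨y, hy⟩ hchain.directedOn hJ₀le
      have : x ∈ (E : FractionalIdeal A⁰ K) := by
        rw [← (hcS hEc).2.1.2]
        exact star_coe_mono s hJ₀0 hJ₀E hxJ
      exact (FractionalIdeal.coeIdeal_le_coeIdeal K).mpr (le_sSup hEc) this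
    · -- I ≤ sSup c
      exact ((hcS hy).2.2).trans (le_sSup hy)
  obtain ⟨M, hIM, hMS, hMmax⟩ := zorn_le_nonempty₀ S hchain I ⟨htop, hI, le_rfl⟩
  refine ⟨M, ⟨hMS.1, hMS.2.1, fun J hJt hJs hMJ => ?_⟩, hIM⟩
  exact le_antisymm (hMmax ⟨hJt, hJs, hIM.trans hMJ⟩ hMJ) hMJ

lemma star_sup_eq_one_of_maximal_ne {M N : Ideal A}
    (hM : IsStarMaximal s M) (hN : IsStarMaximal s N) (hMN : M ≠ N) :
    s.star ↑(M ⊔ N) = (1 : FractionalIdeal A⁰ K) := by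
  by_contra hne
  have h0 : M ⊔ N ≠ 0 := ne_zero_of_le' hM.2.1.1 le_sup_left
  have hEtop : starCl s (M ⊔ N) ≠ ⊤ := fun h => hne ((starCl_eq_top_iff s h0).mp h)
  have hE : IsStarIdeal s (starCl s (M ⊔ N)) := isStarIdeal_starCl s h0
  have hEM : starCl s (M ⊔ N) = M :=
    hM.2.2 _ hEtop hE (le_sup_left.trans (le_starCl s h0))
  have hNM : N ≤ M := hEM ▸ (le_sup_right.trans (le_starCl s h0))
  exact hMN (hN.2.2 M hM.1 hM.2.1 hNM)

lemma star_sup_eq_one_of_not_le {M c : Ideal A}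
    (hM : IsStarMaximal s M) (hc0 : c ≠ 0) (hcM : ¬ c ≤ M) :
    s.star ↑(c ⊔ M) = (1 : FractionalIdeal A⁰ K) := by
  by_contra hne
  have h0 : c ⊔ M ≠ 0 := ne_zero_of_le' hc0 le_sup_left
  have hEtop : starCl s (c ⊔ M) ≠ ⊤ := fun h => hne ((starCl_eq_top_iff s h0).mp h)
  have hE : IsStarIdeal s (starCl s (c ⊔ M)) := isStarIdeal_starCl s h0
  have hEM : starCl s (c ⊔ M) = M :=
    hM.2.2 _ hEtop hE (le_sup_right.trans (le_starCl s h0))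
  exact hcM (hEM ▸ (le_sup_left.trans (le_starCl s h0)))

/-- From `(P + Q)^⋆ = A` extract finitely generated comaximal pieces. -/
lemma exists_fg_comax (hs : s.IsFiniteType) {P Q : Ideal A} (hP : P ≠ 0)
    (h : s.star ↑(P ⊔ Q) = (1 : FractionalIdeal A⁰ K)) :
    ∃ m n : Ideal A, m ≤ P ∧ n ≤ Q ∧ m.FG ∧ n.FG ∧ m ⊔ n ≠ 0 ∧
      s.star ↑(m ⊔ n) = (1 : FractionalIdeal A⁰ K) := by
  classical
  have hPQ : P ⊔ Q ≠ 0 := ne_zero_of_le' hP le_sup_left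
  obtain ⟨J, hJ0, hJle, hJfg, h1J⟩ :=
    hs _ (coeI_ne_zero hPQ) 1 (one_mem_of_star_eq_one s h)
  obtain ⟨J₀, rfl⟩ := FractionalIdeal.le_one_iff_exists_coeIdeal.mp
    (hJle.trans FractionalIdeal.coeIdeal_le_one)
  have hJ₀0 : J₀ ≠ 0 := fun h0 => hJ0 (by rw [h0]; simp)
  have hJ₀fg : J₀.FG :=
    (IsLocalization.coeSubmodule_fg K (IsFractionRing.injective A K) J₀).mp
      (by rw [← FractionalIdeal.coe_coeIdeal]; exact hJfg)
  have hJ₀le : J₀ ≤ P ⊔ Q := (FractionalIdeal.coeIdeal_le_coeIdeal K).mp hJle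
  obtain ⟨t, ht⟩ := hJ₀fg
  have hdec : ∀ x ∈ (t : Set A), ∃ pq : A × A, pq.1 ∈ P ∧ pq.2 ∈ Q ∧ pq.1 + pq.2 = x := by
    intro x hx
    have hxPQ : x ∈ P ⊔ Q := hJ₀le (ht ▸ Ideal.subset_span hx)
    obtain ⟨p, hp, q, hq, hpq⟩ := Submodule.mem_sup.mp hxPQ
    exact ⟨(p, q), hp, hq, hpq⟩
  choose! pq hp hq hpq using hdec
  refine ⟨Ideal.span (Prod.fst ∘ pq '' t), Ideal.span (Prod.snd ∘ pq '' t), ?_, ?_, ?_, ?_, ?_, ?_⟩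
  · exact Ideal.span_le.mpr (by rintro _ ⟨x, hx, rfl⟩; exact hp x hx)
  · exact Ideal.span_le.mpr (by rintro _ ⟨x, hx, rfl⟩; exact hq x hx)
  · exact Submodule.fg_span (t.finite_toSet.image _)
  · exact Submodule.fg_span (t.finite_toSet.image _)
  all_goals {
    have hJsub : J₀ ≤ Ideal.span (Prod.fst ∘ pq '' t) ⊔ Ideal.span (Prod.snd ∘ pq '' t) := by
      rw [← ht]
      refine Ideal.span_le.mpr fun x hx => ?_
      have : (pq x).1 + (pq x).2 = x := hpq x hx
      rw [← this]
      exact Submodule.add_mem_sup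
        (Ideal.subset_span ⟨x, hx, rfl⟩) (Ideal.subset_span ⟨x, hx, rfl⟩)
    first
    | exact ne_zero_of_le' hJ₀0 hJsub
    | exact star_eq_one_of_one_mem s (ne_zero_of_le' hJ₀0 hJsub)
        (star_coe_mono s hJ₀0 hJsub h1J)
  }

/-- Dependent recursion producing an infinite sequence. -/
lemma seq_rec_aux {α : Type*} (P : α → Prop) (R : α → α → Prop) (x0 : α) (h0 : P x0)
    (step : ∀ x, P x → ∃ y, P y ∧ R x y) :
    ∃ f : ℕ → α, ∀ n, P (f n) ∧ R (f n) (f (n + 1)) := by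
  let g : ℕ → {x // P x} := fun n => Nat.rec ⟨x0, h0⟩
    (fun _ p => ⟨Classical.choose (step p.1 p.2), (Classical.choose_spec (step p.1 p.2)).1⟩) n
  exact ⟨fun n => (g n).1, fun n => ⟨(g n).2, (Classical.choose_spec (step (g n).1 (g n).2)).2⟩⟩

end Helpers2

section Core

variable (s : StarOperation A K)

/-- Admissible ideals over `a`: proper ⋆-finite ⋆-ideals containing `a`. -/
def Adm (s : StarOperation A K) (a : A) (b : Ideal A) : Prop :=
  a ∈ b ∧ b ≠ ⊤ ∧ IsStarIdeal s b ∧ IsStarFinite s b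

/-- The set of ⋆-maximal ideals containing `b`. -/
def VSet (s : StarOperation A K) (b : Ideal A) : Set (Ideal A) :=
  {M | IsStarMaximal s M ∧ b ≤ M}

lemma range_mem_sigmaP {a : A} {f : ℕ → Ideal A} (hP : ∀ n, Adm s a (f n))
    (hr : ∀ m n, m ≠ n → s.star ↑(f m ⊔ f n) = (1 : FractionalIdeal A⁰ K)) :
    Set.range f ∈ SigmaP s a ∧ (Set.range f).Infinite := by
  have hinj : Function.Injective f := by
    intro m n hmn
    by_contra hne
    have h := hr m n hne
    rw [hmn, sup_idem, (hP n).2.2.1.2] at h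
    exact (hP n).2.1 (by rwa [← FractionalIdeal.coeIdeal_top,
      FractionalIdeal.coeIdeal_inj' (P := K) (le_refl A⁰)] at h)
  refine ⟨⟨⟨?_, ?_⟩, ?_⟩, Set.infinite_range_of_injective hinj⟩
  · rintro _ ⟨n, rfl⟩; exact (hP n).1
  · rintro _ ⟨m, rfl⟩ _ ⟨n, rfl⟩ hne
    rw [Ideal.add_eq_sup]
    exact hr m n (fun h => hne (by rw [h]))
  · rintro _ ⟨n, rfl⟩; exact ⟨(hP n).2.1, (hP n).2.2.1, (hP n).2.2.2⟩

/-- The key splitting lemma: a ⋆-comaximal splitting off of any admissible ideal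
contained in infinitely many ⋆-maximal ideals. -/
lemma splitting (hs : s.IsFiniteType) {a : A}
    (H : ∀ F ∈ SigmaP s a, F.Finite) {b : Ideal A} (hb : Adm s a b)
    (hbV : (VSet s b).Infinite) :
    ∃ c d : Ideal A, Adm s a c ∧ Adm s a d ∧ b ≤ c ∧ b ≤ d ∧
      (VSet s d).Infinite ∧ s.star ↑(c ⊔ d) = (1 : FractionalIdeal A⁰ K) := by
  classical
  by_contra hno
  push_neg at hno
  have hb0 : b ≠ 0 := hb.2.2.1.1
  obtain ⟨b', hb'0, hb'fg, hb'star⟩ := hb.2.2.2.2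
  -- (†): in a comaximal admissible pair over b, the second member has finite V
  have dagger : ∀ c d : Ideal A, Adm s a c → Adm s a d → b ≤ c → b ≤ d →
      s.star ↑(c ⊔ d) = (1 : FractionalIdeal A⁰ K) → (VSet s d).Finite := by
    intro c d h1 h2 h3 h4 h5
    by_contra hfin
    exact hno c d h1 h2 h3 h4 hfin h5
  -- the finset extension step
  have main : ∀ t : Finset (Ideal A), (∀ x ∈ t, Adm s a x ∧ b ≤ x ∧ (VSet s x).Finite) →
      ∃ y, (Adm s a y ∧ b ≤ y ∧ (VSet s y).Finite) ∧
        ∀ x ∈ t, s.star ↑(x ⊔ y) = (1 : FractionalIdeal A⁰ K) := by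
    intro t ht
    have hUfin : (⋃ I ∈ t, VSet s I).Finite :=
      t.finite_toSet.biUnion fun I hI => (ht I hI).2.2
    obtain ⟨M, hMVb, hMU⟩ := (hbV.diff hUfin).nonempty
    obtain ⟨N, hNVb, hNM⟩ := (hbV.diff (Set.finite_singleton M)).nonempty
    have hMmax : IsStarMaximal s M := hMVb.1
    have hbM : b ≤ M := hMVb.2
    have hNmax : IsStarMaximal s N := hNVb.1
    have hbN : b ≤ N := hNVb.2
    have hMN : M ≠ N := fun h => hNM (Set.mem_singleton_iff.mpr h.symm)
    -- comaximal fg pieces inside M and N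
    obtain ⟨m0, n0, hm0M, hn0N, hm0fg, hn0fg, hmn0, hmn0star⟩ :=
      exists_fg_comax s hs hMmax.2.1.1 (star_sup_eq_one_of_maximal_ne s hMmax hNmax hMN)
    -- for each x ∈ t, an fg piece of M comaximal with x
    have hsep : ∀ x ∈ t, ∃ nx : Ideal A, nx ≤ M ∧ nx.FG ∧
        s.star ↑(x ⊔ nx) = (1 : FractionalIdeal A⁰ K) := by
      intro x hxt
      have hx0 : x ≠ 0 := (ht x hxt).1.2.2.1.1
      have hxM : ¬ x ≤ M := fun hle => hMU (Set.mem_biUnion hxt ⟨hMmax, hle⟩)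
      obtain ⟨mx, nx, hmx, hnx, _, hnxfg, hmnx0, hmnxstar⟩ :=
        exists_fg_comax s hs hx0 (star_sup_eq_one_of_not_le s hMmax hx0 hxM)
      exact ⟨nx, hnx, hnxfg, star_eq_one_of_le s hmnx0 (sup_le_sup hmx le_rfl) hmnxstar⟩
    choose! nfun hn using hsep
    set SS : Ideal A := t.sup nfun with hSS
    have hSSM : SS ≤ M := Finset.sup_le fun I hI => (hn I hI).1
    have hSSfg : SS.FG := Submodule.fg_finset_sup t nfun fun I hI => (hn I hI).2.1
    -- the new admissible ideal
    set base : Ideal A := b ⊔ (m0 ⊔ SS) with hbase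
    have hbase0 : base ≠ 0 := ne_zero_of_le' hb0 le_sup_left
    have hbaseM : base ≤ M := sup_le hbM (sup_le hm0M hSSM)
    set y : Ideal A := starCl s base with hy
    have hyM : y ≤ M := starCl_le_of_le s hbase0 hMmax.2.1 hbaseM
    have hby : b ≤ y := le_sup_left.trans (le_starCl s hbase0)
    have hbasey : base ≤ y := le_starCl s hbase0
    have hystar : s.star (y : FractionalIdeal A⁰ K) = s.star ↑base := by
      rw [hy, coe_starCl s hbase0, s.star_idem _ (coeI_ne_zero hbase0)]
    have hyAdm : Adm s a y := by
      refine ⟨hby hb.1, fun h => hMmax.1 (top_le_iff.mp (h ▸ hyM)),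
        isStarIdeal_starCl s hbase0, starCl_ne_zero s hbase0, b' ⊔ (m0 ⊔ SS),
        ne_zero_of_le' hb'0 le_sup_left, (Submodule.FG.sup hb'fg (Submodule.FG.sup hm0fg hSSfg)), ?_⟩
      rw [hystar, hbase]
      exact star_sup_congr s hb'0 hb0 hb'star
    -- the companion d0 inside N forces V y to be finite
    have hbn0 : b ⊔ n0 ≠ 0 := ne_zero_of_le' hb0 le_sup_left
    have hbn0N : b ⊔ n0 ≤ N := sup_le hbN hn0N
    set d0 : Ideal A := starCl s (b ⊔ n0) with hd0
    have hd0N : d0 ≤ N := starCl_le_of_le s hbn0 hNmax.2.1 hbn0N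
    have hbd0 : b ≤ d0 := le_sup_left.trans (le_starCl s hbn0)
    have hd0star : s.star (d0 : FractionalIdeal A⁰ K) = s.star ↑(b ⊔ n0) := by
      rw [hd0, coe_starCl s hbn0, s.star_idem _ (coeI_ne_zero hbn0)]
    have hd0Adm : Adm s a d0 := by
      refine ⟨hbd0 hb.1, fun h => hNmax.1 (top_le_iff.mp (h ▸ hd0N)),
        isStarIdeal_starCl s hbn0, starCl_ne_zero s hbn0, b' ⊔ n0,
        ne_zero_of_le' hb'0 le_sup_left, (Submodule.FG.sup hb'fg hn0fg), ?_⟩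
      rw [hd0star]
      exact star_sup_congr s hb'0 hb0 hb'star
    have hcomax0 : s.star ↑(d0 ⊔ y) = (1 : FractionalIdeal A⁰ K) := by
      refine star_eq_one_of_le s hmn0 ?_ hmn0star
      exact sup_le ((le_sup_left.trans le_sup_right : m0 ≤ base).trans
          (hbasey.trans le_sup_right))
        ((le_sup_right.trans (le_starCl s hbn0)).trans le_sup_left)
    have hVyfin : (VSet s y).Finite := dagger d0 y hd0Adm hyAdm hbd0 hby hcomax0
    refine ⟨y, ⟨hyAdm, hby, hVyfin⟩, fun x hxt => ?_⟩
    have hx0 : x ≠ 0 := (ht x hxt).1.2.2.1.1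
    have hnxy : nfun x ≤ y := (Finset.le_sup hxt).trans
      ((le_sup_right.trans le_sup_right : SS ≤ base).trans hbasey)
    exact star_eq_one_of_le s (ne_zero_of_le' hx0 le_sup_left)
      (sup_le_sup le_rfl hnxy) (hn x hxt).2.2
  haveI : Std.Symm (α := Ideal A)
      (fun x y => s.star ↑(x ⊔ y) = (1 : FractionalIdeal A⁰ K)) :=
    ⟨fun x y h => by rwa [sup_comm] at h⟩
  obtain ⟨f, hf, hf'⟩ := exists_seq_of_forall_finset_exists'
    (fun x => Adm s a x ∧ b ≤ x ∧ (VSet s x).Finite)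
    (fun x y => s.star ↑(x ⊔ y) = (1 : FractionalIdeal A⁰ K)) main
  obtain ⟨hmem, hinf⟩ := range_mem_sigmaP s (fun n => (hf n).1) (fun m n h => hf' h)
  exact hinf (H _ hmem)

end Core

/-- Let `A` be an integral domain and `⋆` a finite type star operation on `A`. Then `A`
has the ⋆-finite character (every nonzero element lies in only finitely many ⋆-maximal
ideals) iff for every nonzero `a ∈ A`, every ⋆-comaximal collection over `a` of proper
⋆-finite ⋆-ideals is finite. -/
theorem star_finite_character_iff_comaximal_families_finite
    (s : StarOperation A K) (hs : s.IsFiniteType) :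
    (∀ a : A, a ≠ 0 → {M : Ideal A | IsStarMaximal s M ∧ a ∈ M}.Finite) ↔
      (∀ a : A, a ≠ 0 → ∀ F ∈ SigmaP s a, F.Finite) := by
  classical
  constructor
  · -- finite character implies all comaximal families are finite
    intro hfc a ha F hF
    obtain ⟨⟨hmem, hcomax⟩, hprop⟩ := hF
    have hex : ∀ I ∈ F, ∃ M : Ideal A, IsStarMaximal s M ∧ I ≤ M := fun I hI =>
      exists_starMaximal s hs (hprop I hI).2.1 (hprop I hI).1
    choose! Φ hΦ using hex
    have hinj : Set.InjOn Φ F := by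
      intro I hI J hJ hij
      by_contra hne
      have h1 := hcomax I hI J hJ hne
      have hI0 : I ≠ 0 := (hprop I hI).2.1.1
      have hle : I + J ≤ Φ I := by
        rw [Ideal.add_eq_sup]
        exact sup_le (hΦ I hI).2 (hij ▸ (hΦ J hJ).2)
      have h2 : (1 : K) ∈ ((Φ I : Ideal A) : FractionalIdeal A⁰ K) := by
        rw [← (hΦ I hI).1.2.1.2]
        exact star_coe_mono s (ne_zero_of_le' hI0 (by rw [Ideal.add_eq_sup]; exact le_sup_left))
          hle (one_mem_of_star_eq_one s h1)
      have h3 : Φ I = ⊤ := by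
        have : (1 : FractionalIdeal A⁰ K) ≤ ↑(Φ I) := FractionalIdeal.one_le.mpr h2
        rw [← FractionalIdeal.coeIdeal_top] at this
        exact top_le_iff.mp ((FractionalIdeal.coeIdeal_le_coeIdeal K).mp this)
      exact (hΦ I hI).1.1 h3
    have hsub : Φ '' F ⊆ {M : Ideal A | IsStarMaximal s M ∧ a ∈ M} := by
      rintro _ ⟨I, hI, rfl⟩
      exact ⟨(hΦ I hI).1, (hΦ I hI).2 (hmem I hI)⟩
    exact Set.Finite.of_finite_image ((hfc a ha).subset hsub) hinj
  · -- all comaximal families finite implies finite character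
    intro H a ha
    by_contra hfin
    have hinf : {M : Ideal A | IsStarMaximal s M ∧ a ∈ M}.Infinite := hfin
    have hspan0 : Ideal.span {a} ≠ (0 : Ideal A) := by
      simpa [Ideal.span_singleton_eq_bot] using ha
    by_cases h1 : s.star ↑(Ideal.span {a}) = (1 : FractionalIdeal A⁰ K)
    · obtain ⟨M, hMmax, haM⟩ := hinf.nonempty
      have hle : Ideal.span {a} ≤ M := (Ideal.span_singleton_le_iff_mem _).mpr haM
      have h2 : s.star ↑M = (1 : FractionalIdeal A⁰ K) := star_eq_one_of_le s hspan0 hle h1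
      rw [hMmax.2.1.2] at h2
      exact hMmax.1 (by rwa [← FractionalIdeal.coeIdeal_top,
        FractionalIdeal.coeIdeal_inj' (P := K) (le_refl A⁰)] at h2)
    · set b0 : Ideal A := starCl s (Ideal.span {a}) with hb0def
      have hb0Adm : Adm s a b0 := by
        refine ⟨le_starCl s hspan0 (Ideal.subset_span rfl),
          fun h => h1 ((starCl_eq_top_iff s hspan0).mp h),
          isStarIdeal_starCl s hspan0, starCl_ne_zero s hspan0, Ideal.span {a},
          hspan0, Submodule.fg_span (Set.finite_singleton a), ?_⟩
        rw [hb0def, coe_starCl s hspan0, s.star_idem _ (coeI_ne_zero hspan0)]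
      have hXsub : {M : Ideal A | IsStarMaximal s M ∧ a ∈ M} ⊆ VSet s b0 := by
        intro M hM
        exact ⟨hM.1, starCl_le_of_le s hspan0 hM.1.2.1
          ((Ideal.span_singleton_le_iff_mem _).mpr hM.2)⟩
      have hbV : (VSet s b0).Infinite := hinf.mono hXsub
      obtain ⟨f, hf⟩ := seq_rec_aux
        (fun q : Ideal A × Ideal A => Adm s a q.2 ∧ (VSet s q.2).Infinite)
        (fun q q' => Adm s a q'.1 ∧ q.2 ≤ q'.1 ∧ q.2 ≤ q'.2 ∧
          s.star ↑(q'.1 ⊔ q'.2) = (1 : FractionalIdeal A⁰ K))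
        (b0, b0) ⟨hb0Adm, hbV⟩
        (fun q hq => by
          obtain ⟨c, d, hc, hd, hbc, hbd, hVd, hstar⟩ := splitting s hs (H a ha) hq.1 hq.2
          exact ⟨(c, d), ⟨hd, hVd⟩, hc, hbc, hbd, hstar⟩)
      set c : ℕ → Ideal A := fun n => (f (n + 1)).1 with hcdef
      set bb : ℕ → Ideal A := fun n => (f n).2 with hbbdef
      have hbmono : Monotone bb := monotone_nat_of_le_succ fun n => (hf n).2.2.2.1
      have hcAdm : ∀ n, Adm s a (c n) := fun n => (hf n).2.1
      have hckey : ∀ m n, m < n →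
          s.star ↑(c m ⊔ c n) = (1 : FractionalIdeal A⁰ K) := by
        intro m n hmn
        have hle1 : bb (m + 1) ≤ c n := (hbmono hmn).trans (hf n).2.2.1
        have h2 : s.star ↑(c m ⊔ bb (m + 1)) = (1 : FractionalIdeal A⁰ K) :=
          (hf m).2.2.2.2
        have hcm0 : c m ≠ 0 := (hcAdm m).2.2.1.1
        exact star_eq_one_of_le s (ne_zero_of_le' hcm0 le_sup_left)
          (sup_le_sup le_rfl hle1) h2
      have hcall : ∀ m n, m ≠ n →
          s.star ↑(c m ⊔ c n) = (1 : FractionalIdeal A⁰ K) := by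
        intro m n hne
        rcases lt_or_gt_of_ne hne with h | h
        · exact hckey m n h
        · rw [sup_comm]; exact hckey n m h
      obtain ⟨hmem, hinf2⟩ := range_mem_sigmaP s hcAdm hcall
      exact hinf2 (H a ha _ hmem)
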